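/- For 1 < p ≤ 2 and all complex numbers z, w, one has (|w|² + |z|²)^(p/2) ≤ (1 + cos(π/p))^(−p/2) · |w + conj(z)|^p − 2^(p/2) · tan(π/(2p)) · F_p(z,w), where F_p(z,w) = Re((wz)^(p/2)) defined via the branch: for ζ = ρ e^{iθ} with θ ∈ [−π, π], Re(ζ^(p/2)) = ρ^(p/2) cos(pθ/2). -/

import Mathlib

open Real Complex Set
set_option maxHeartbeats 1000000


lemma chord_sin {x y : ℝ} (hx : 0 ≤ x) (hxy : x ≤ y) (hy : y ≤ π) :
    x * Real.sin y ≤ y * Real.sin x := by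
  rcases eq_or_lt_of_le (hx.trans hxy) with h | hy0
  · have : x = 0 := le_antisymm (by linarith) hx
    simp [this, ← h]
  · have hcc := strictConcaveOn_sin_Icc.concaveOn
    have ha : (0:ℝ) ≤ x/y := by positivity
    have hb : (0:ℝ) ≤ 1 - x/y := by
      have : x/y ≤ 1 := (div_le_one hy0).2 hxy
      linarith
    have h1 := hcc.2 (Set.mem_Icc.2 ⟨le_of_lt hy0, hy⟩)
      (Set.mem_Icc.2 ⟨le_refl 0, Real.pi_pos.le⟩) ha hb (by ring)
    rw [smul_eq_mul, smul_eq_mul, smul_eq_mul, smul_eq_mul, mul_zero, add_zero,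
      Real.sin_zero, mul_zero, add_zero] at h1
    have h2 : x / y * y = x := by field_simp
    rw [h2] at h1
    calc x * Real.sin y = y * ((x/y) * Real.sin y) := by field_simp
    _ ≤ y * Real.sin x := mul_le_mul_of_nonneg_left h1 hy0.le
section KEY
variable {p : ℝ} (hp1 : 1 < p) (hp2 : p ≤ 2)

private noncomputable def Hfun (p : ℝ) : ℝ → ℝ :=
  fun t => Real.cos t ^ (p-1) * Real.sin t / Real.sin (p*t)

private noncomputable def Hder (p t : ℝ) : ℝ :=
  (((-(Real.sin t)) * (p-1) * Real.cos t ^ (p-1-1) * Real.sin t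
      + Real.cos t ^ (p-1) * Real.cos t) * Real.sin (p*t)
    - Real.cos t ^ (p-1) * Real.sin t * (Real.cos (p*t) * (p*1))) / (Real.sin (p*t)) ^ 2

include hp1 hp2 in
lemma Hfun_hasDeriv {t : ℝ} (ht : t ∈ Ioo (0:ℝ) (π/2)) :
    HasDerivAt (Hfun p) (Hder p t) t := by
  obtain ⟨ht0, ht2⟩ := ht
  have hc : 0 < Real.cos t := Real.cos_pos_of_mem_Ioo ⟨by linarith [Real.pi_pos], ht2⟩
  have hs : 0 < Real.sin (p*t) := by
    apply Real.sin_pos_of_pos_of_lt_pi (by positivity)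
    nlinarith [Real.pi_pos]
  have h1 : HasDerivAt (fun u => Real.cos u ^ (p-1))
      ((-(Real.sin t)) * (p-1) * Real.cos t ^ (p-1-1)) t :=
    (Real.hasDerivAt_cos t).rpow_const (Or.inl (ne_of_gt hc))
  have h2 := h1.mul (Real.hasDerivAt_sin t)
  have h3 : HasDerivAt (fun u => Real.sin (p*u)) (Real.cos (p*t) * (p*1)) t :=
    (Real.hasDerivAt_sin (p*t)).comp t ((hasDerivAt_id t).const_mul p)
  exact h2.div h3 (ne_of_gt hs)

include hp1 hp2 in
lemma Hder_nonpos {t : ℝ} (ht : t ∈ Ioo (0:ℝ) (π/2)) : Hder p t ≤ 0 := by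
  obtain ⟨ht0, ht2⟩ := ht
  have hc : 0 < Real.cos t := Real.cos_pos_of_mem_Ioo ⟨by linarith [Real.pi_pos], ht2⟩
  have hptpi : p * t < π := by nlinarith [Real.pi_pos]
  have hchord := chord_sin (x := (2-p)*t) (y := p*t) (by nlinarith) (by nlinarith) hptpi.le
  have hbr : (2-p) * Real.sin (p*t) ≤ p * Real.sin ((2-p)*t) := by
    have h := hchord
    rw [mul_comm (2-p) t, mul_assoc] at h
    nlinarith
  have hsplit : Real.cos t ^ (p-1) = Real.cos t ^ (p-2) * Real.cos t := by
    rw [← Real.rpow_add_one (ne_of_gt hc), show p-2+1 = p-1 by ring]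
  have hsplit2 : Real.cos t ^ (p-1-1) = Real.cos t ^ (p-2) := by
    rw [show p-1-1 = p-2 by ring]
  have hid : Real.sin ((2-p)*t)
      = Real.sin (2*t) * Real.cos (p*t) - Real.cos (2*t) * Real.sin (p*t) := by
    rw [show (2-p)*t = 2*t - p*t by ring, Real.sin_sub]
  -- numerator = cos^{p-2} * B with B ≤ 0
  have hB : (Real.cos t ^ 2 - (p-1) * Real.sin t ^ 2) * Real.sin (p*t)
      - p * Real.sin t * Real.cos t * Real.cos (p*t)
      = (1/2) * ((2-p) * Real.sin (p*t) - p * Real.sin ((2-p)*t)) := by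
    rw [hid, Real.sin_two_mul, Real.cos_two_mul]
    linear_combination (-(p-1) * Real.sin (p*t)) * Real.sin_sq_add_cos_sq t
  have hnum : ((-(Real.sin t)) * (p-1) * Real.cos t ^ (p-1-1) * Real.sin t
      + Real.cos t ^ (p-1) * Real.cos t) * Real.sin (p*t)
      - Real.cos t ^ (p-1) * Real.sin t * (Real.cos (p*t) * (p*1))
      = Real.cos t ^ (p-2) * ((Real.cos t ^ 2 - (p-1) * Real.sin t ^ 2) * Real.sin (p*t)
        - p * Real.sin t * Real.cos t * Real.cos (p*t)) := by
    rw [hsplit, hsplit2]; ring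
  have hcp : 0 < Real.cos t ^ (p-2) := Real.rpow_pos_of_pos hc _
  have : Real.cos t ^ (p-2) * ((Real.cos t ^ 2 - (p-1) * Real.sin t ^ 2) * Real.sin (p*t)
        - p * Real.sin t * Real.cos t * Real.cos (p*t)) ≤ 0 := by
    apply mul_nonpos_of_nonneg_of_nonpos hcp.le
    rw [hB]; nlinarith
  unfold Hder
  apply div_nonpos_of_nonpos_of_nonneg _ (sq_nonneg _)
  rw [hnum]; exact this

include hp1 hp2 in
lemma Hfun_anti : AntitoneOn (Hfun p) (Ioo (0:ℝ) (π/2)) := by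
  apply antitoneOn_of_deriv_nonpos (convex_Ioo _ _)
  · intro t ht
    exact (Hfun_hasDeriv hp1 hp2 ht).continuousAt.continuousWithinAt
  · rw [interior_Ioo]
    exact fun t ht => (Hfun_hasDeriv hp1 hp2 ht).differentiableAt.differentiableWithinAt
  · rw [interior_Ioo]
    intro t ht
    rw [(Hfun_hasDeriv hp1 hp2 ht).deriv]
    exact Hder_nonpos hp1 hp2 ht

include hp1 hp2 in
lemma key {x y : ℝ} (hx : 0 < x) (hxy : x ≤ y) (hy : y < π/2) :
    Real.cos y ^ (p-1) * Real.sin y * Real.sin (p*x) ≤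
      Real.cos x ^ (p-1) * Real.sin x * Real.sin (p*y) := by
  have hx2 : x < π/2 := lt_of_le_of_lt hxy hy
  have hy0 : 0 < y := lt_of_lt_of_le hx hxy
  have hsx : 0 < Real.sin (p*x) := by
    apply Real.sin_pos_of_pos_of_lt_pi (by positivity); nlinarith [Real.pi_pos]
  have hsy : 0 < Real.sin (p*y) := by
    apply Real.sin_pos_of_pos_of_lt_pi (by positivity); nlinarith [Real.pi_pos]
  have h := Hfun_anti hp1 hp2 ⟨hx, hx2⟩ ⟨lt_of_lt_of_le hx hxy, hy⟩ hxy
  unfold Hfun at h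
  rw [div_le_div_iff₀ hsy hsx] at h
  linarith
end KEY
section A
variable {p : ℝ} (hp1 : 1 < p) (hp2 : p ≤ 2)

private noncomputable def Gfun (p : ℝ) : ℝ → ℝ := fun t =>
  Real.cos t ^ p - (Real.cos (π/(2*p)) ^ p
    + Real.cos (π/(2*p)) ^ (p-1) * Real.sin (π/(2*p)) * Real.cos (p*t))

private noncomputable def Gder (p t : ℝ) : ℝ :=
  (-(Real.sin t)) * p * Real.cos t ^ (p-1)
    + Real.cos (π/(2*p)) ^ (p-1) * Real.sin (π/(2*p)) * (Real.sin (p*t) * (p*1))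

include hp1 hp2 in
lemma Gfun_hasDeriv {t : ℝ} (ht0 : 0 < t) (ht2 : t < π/2) :
    HasDerivAt (Gfun p) (Gder p t) t := by
  have hc : 0 < Real.cos t := Real.cos_pos_of_mem_Ioo ⟨by linarith [Real.pi_pos], ht2⟩
  have h1 : HasDerivAt (fun u => Real.cos u ^ p)
      ((-(Real.sin t)) * p * Real.cos t ^ (p-1)) t :=
    (Real.hasDerivAt_cos t).rpow_const (Or.inl (ne_of_gt hc))
  have h3 : HasDerivAt (fun u => Real.cos (p*u)) ((-Real.sin (p*t)) * (p*1)) t :=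
    (Real.hasDerivAt_cos (p*t)).comp t ((hasDerivAt_id t).const_mul p)
  have := h1.sub (((h3.const_mul
      (Real.cos (π/(2*p)) ^ (p-1) * Real.sin (π/(2*p)))).const_add (Real.cos (π/(2*p)) ^ p)))
  refine this.congr_deriv ?_
  unfold Gder; ring

include hp1 hp2 in
lemma stepA {ψ : ℝ} (h0 : 0 ≤ ψ) (h2 : ψ ≤ π/2) :
    Real.cos (π/(2*p)) ^ p
      + Real.cos (π/(2*p)) ^ (p-1) * Real.sin (π/(2*p)) * Real.cos (p*ψ)
      ≤ Real.cos ψ ^ p := by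
  have hp0 : 0 < p := by linarith
  set α := π/(2*p) with hα
  have hpos : 0 < π := Real.pi_pos
  have hα0 : 0 < α := by positivity
  have hα2 : α < π/2 := by
    rw [hα, div_lt_div_iff₀ (by positivity) (by norm_num)]
    nlinarith
  have hpα : p * α = π/2 := by rw [hα]; field_simp
  have hG : ∀ t, Gfun p t = Real.cos t ^ p - (Real.cos α ^ p
      + Real.cos α ^ (p-1) * Real.sin α * Real.cos (p*t)) := fun t => rfl
  have hGα : Gfun p α = 0 := by
    rw [hG, hpα, Real.cos_pi_div_two]; ring
  have hcont : ∀ s : Set ℝ, ContinuousOn (Gfun p) s := by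
    intro s
    apply ContinuousOn.sub
    · exact (Real.continuous_cos.rpow_const (fun x => Or.inr hp0.le)).continuousOn
    · exact (continuous_const.add (continuous_const.mul
        (Real.continuous_cos.comp (continuous_const.mul continuous_id)))).continuousOn
  have hG0 : 0 ≤ Gfun p ψ := by
    rcases le_total ψ α with hcase | hcase
    · -- antitone on [0, α]
      have hanti : AntitoneOn (Gfun p) (Icc 0 α) := by
        apply antitoneOn_of_deriv_nonpos (convex_Icc _ _) (hcont _)
        · rw [interior_Icc]
          exact fun t ht => (Gfun_hasDeriv hp1 hp2 ht.1
            (lt_trans ht.2 hα2)).differentiableAt.differentiableWithinAt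
        · rw [interior_Icc]
          intro t ht
          rw [(Gfun_hasDeriv hp1 hp2 ht.1 (lt_trans ht.2 hα2)).deriv]
          have hk := key hp1 hp2 ht.1 ht.2.le hα2
          rw [hpα, Real.sin_pi_div_two, mul_one] at hk
          unfold Gder
          nlinarith
      have := hanti ⟨h0, hcase⟩ ⟨hα0.le, le_refl α⟩ hcase
      rw [hGα] at this; exact this
    · -- monotone on [α, π/2]
      have hmono : MonotoneOn (Gfun p) (Icc α (π/2)) := by
        apply monotoneOn_of_deriv_nonneg (convex_Icc _ _) (hcont _)
        · rw [interior_Icc]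
          exact fun t ht => (Gfun_hasDeriv hp1 hp2 (lt_trans hα0 ht.1)
            ht.2).differentiableAt.differentiableWithinAt
        · rw [interior_Icc]
          intro t ht
          rw [(Gfun_hasDeriv hp1 hp2 (lt_trans hα0 ht.1) ht.2).deriv]
          have hk := key hp1 hp2 hα0 ht.1.le ht.2
          rw [hpα, Real.sin_pi_div_two, mul_one] at hk
          unfold Gder
          nlinarith
      have := hmono ⟨le_refl α, hα2.le⟩ ⟨hcase, h2⟩ hcase
      rw [hGα] at this; exact this
  rw [hG] at hG0; linarith
end A
private noncomputable def Wfun : ℝ → ℝ := fun a => Real.exp (-(2*a/π) * Real.log 2) - Real.cos a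

lemma Wfun_hasDeriv (a : ℝ) : HasDerivAt Wfun
    (-(2/π) * Real.log 2 * Real.exp (-(2*a/π) * Real.log 2) + Real.sin a) a := by
  have h1 : HasDerivAt (fun u : ℝ => -(2*u/π) * Real.log 2) (-(2/π) * Real.log 2) a := by
    have : HasDerivAt (fun u : ℝ => (-(2/π) * Real.log 2) * u) (-(2/π) * Real.log 2) a := by
      simpa using (hasDerivAt_id a).const_mul (-(2/π) * Real.log 2)
    convert this using 2 with u
    ring
  have h2 := (Real.hasDerivAt_exp _).comp a h1
  have h3 := h2.sub (Real.hasDerivAt_cos a)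
  refine h3.congr_deriv ?_
  ring

lemma cos_le_exp {a : ℝ} (h1 : π/4 ≤ a) (h2 : a ≤ π/2) :
    Real.cos a ≤ Real.exp (-(2*a/π) * Real.log 2) := by
  have hpi := Real.pi_pos
  have hlog2 : Real.log 2 ≤ 1 := by
    have := Real.add_one_le_exp (Real.log 2)
    nlinarith [Real.exp_log (show (0:ℝ) < 2 by norm_num)]
  have hlog2' : 0 < Real.log 2 := Real.log_pos (by norm_num)
  have hs14 : 4/3 < Real.sqrt 2 := by
    nlinarith [Real.sq_sqrt (show (0:ℝ) ≤ 2 by norm_num), Real.sqrt_nonneg 2]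
  have hmono : MonotoneOn Wfun (Icc (π/4) (π/2)) := by
    apply monotoneOn_of_deriv_nonneg (convex_Icc _ _)
    · exact fun t _ => (Wfun_hasDeriv t).continuousAt.continuousWithinAt
    · exact fun t _ => (Wfun_hasDeriv t).differentiableAt.differentiableWithinAt
    · rw [interior_Icc]
      intro t ht
      rw [(Wfun_hasDeriv t).deriv]
      have ht0 : 0 < t := by linarith [ht.1]
      have hsin : Real.sqrt 2 / 2 ≤ Real.sin t := by
        rw [← Real.sin_pi_div_four]
        exact Real.sin_le_sin_of_le_of_le_pi_div_two (by linarith) ht.2.le ht.1.le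
      have hexp : Real.exp (-(2*t/π) * Real.log 2) ≤ 1 := by
        apply Real.exp_le_one_iff.2
        have h0 : 0 < 2*t/π := by positivity
        nlinarith [mul_pos h0 hlog2']
      have hpi3 : 3 ≤ π := by linarith [Real.pi_gt_three]
      have h23 : (2:ℝ)/π ≤ 2/3 :=
        div_le_div_of_nonneg_left (by norm_num) (by norm_num) hpi3
      have hb : (2/π) * Real.log 2 * Real.exp (-(2*t/π) * Real.log 2) ≤ (2/π) * 1 * 1 := by
        apply mul_le_mul _ hexp (Real.exp_nonneg _) (by positivity)
        exact mul_le_mul_of_nonneg_left hlog2 (by positivity)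
      nlinarith
  have hle := hmono (Set.mem_Icc.2 ⟨le_refl _, by linarith⟩) (Set.mem_Icc.2 ⟨h1, h2⟩) h1
  have hW4 : Wfun (π/4) = 0 := by
    unfold Wfun
    rw [Real.cos_pi_div_four]
    have e1 : -(2*(π/4)/π) * Real.log 2 = Real.log 2 * (-(1/2)) := by
      field_simp
      ring
    rw [e1, ← Real.rpow_def_of_pos (by norm_num : (0:ℝ) < 2)]
    have e2 : (2:ℝ) ^ (-(1/2) : ℝ) = Real.sqrt 2 / 2 := by
      rw [Real.rpow_neg (by norm_num), ← Real.sqrt_eq_rpow, inv_eq_one_div,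
        div_eq_div_iff (by positivity) (by norm_num : (2:ℝ) ≠ 0)]
      nlinarith [Real.sq_sqrt (show (0:ℝ) ≤ 2 by norm_num)]
    rw [e2]; ring
  rw [hW4] at hle
  unfold Wfun at hle
  linarith

lemma cosp_le_half {p : ℝ} (hp1 : 1 < p) (hp2 : p ≤ 2) :
    Real.cos (π/(2*p)) ^ p ≤ 1/2 := by
  have hpi := Real.pi_pos
  have hp0 : 0 < p := by linarith
  set α := π/(2*p) with hα
  have hα4 : π/4 ≤ α := by
    rw [hα, div_le_div_iff₀ (by norm_num) (by positivity)]
    nlinarith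
  have hα2 : α ≤ π/2 := by
    rw [hα, div_le_div_iff₀ (by positivity) (by norm_num)]
    nlinarith
  have h := cos_le_exp hα4 hα2
  have hcos : 0 ≤ Real.cos α := Real.cos_nonneg_of_mem_Icc ⟨by linarith, hα2⟩
  calc Real.cos α ^ p ≤ (Real.exp (-(2*α/π) * Real.log 2)) ^ p :=
        Real.rpow_le_rpow hcos h hp0.le
    _ = Real.exp ((-(2*α/π) * Real.log 2) * p) := by rw [← Real.exp_mul]
    _ = Real.exp (Real.log 2 * (-1)) := by
        congr 1
        rw [hα]; field_simp
    _ = 1/2 := by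
        rw [← Real.rpow_def_of_pos (by norm_num : (0:ℝ) < 2), Real.rpow_neg_one]
        norm_num
lemma stepB_mono {p A x r : ℝ} (hp1 : 1 < p) (hp2 : p ≤ 2) (hr : 0 < r) (hx : |x| ≤ r)
    (hA : 1 ≤ A * 2 ^ (p/2 - 1)) {s : ℝ} (hs : 2*r ≤ s) :
    A * (2*r + 2*x) ^ (p/2) - (2*r) ^ (p/2) ≤ A * (s + 2*x) ^ (p/2) - s ^ (p/2) := by
  have hA0 : 0 < A := by
    by_contra hcon
    push_neg at hcon
    have h2 : (0:ℝ) < 2 ^ (p/2 - 1) := Real.rpow_pos_of_pos (by norm_num) _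
    nlinarith
  obtain ⟨hx1, hx2⟩ := abs_le.1 hx
  set Φ : ℝ → ℝ := fun σ => A * (σ + 2*x) ^ (p/2) - σ ^ (p/2) with hΦ
  have hmono : MonotoneOn Φ (Ici (2*r)) := by
    apply monotoneOn_of_deriv_nonneg (convex_Ici _)
    · apply ContinuousOn.sub
      · apply ContinuousOn.mul continuousOn_const
        apply Continuous.continuousOn
        exact (continuous_id.add continuous_const).rpow_const (fun _ => Or.inr (by positivity))
      · exact (continuous_id.rpow_const (fun _ => Or.inr (by positivity))).continuousOn
    · rw [interior_Ici]
      intro σ hσ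
      rw [Set.mem_Ioi] at hσ
      have hσ0 : 0 < σ := lt_of_le_of_lt (by linarith) hσ
      have hσx : 0 < σ + 2*x := by nlinarith
      have h1 : HasDerivAt (fun σ : ℝ => σ ^ (p/2)) (p/2 * σ ^ (p/2-1)) σ :=
        Real.hasDerivAt_rpow_const (Or.inl (ne_of_gt hσ0))
      have h2 : HasDerivAt (fun σ : ℝ => A * (σ + 2*x) ^ (p/2))
          (A * (1 * (p/2) * (σ + 2*x) ^ (p/2-1))) σ :=
        (((hasDerivAt_id σ).add_const (2*x)).rpow_const (Or.inl (ne_of_gt hσx))).const_mul A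
      exact (h2.sub h1).differentiableAt.differentiableWithinAt
    · rw [interior_Ici]
      intro σ hσ
      rw [Set.mem_Ioi] at hσ
      have hσ0 : 0 < σ := lt_of_le_of_lt (by linarith) hσ
      have hσx : 0 < σ + 2*x := by nlinarith
      have h1 : HasDerivAt (fun σ : ℝ => σ ^ (p/2)) (p/2 * σ ^ (p/2-1)) σ :=
        Real.hasDerivAt_rpow_const (Or.inl (ne_of_gt hσ0))
      have h2 : HasDerivAt (fun σ : ℝ => A * (σ + 2*x) ^ (p/2))
          (A * (1 * (p/2) * (σ + 2*x) ^ (p/2-1))) σ :=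
        (((hasDerivAt_id σ).add_const (2*x)).rpow_const (Or.inl (ne_of_gt hσx))).const_mul A
      rw [show Φ = (fun σ : ℝ => A * (σ + 2*x) ^ (p/2)) - (fun σ : ℝ => σ ^ (p/2)) from rfl,
        (h2.sub h1).deriv]
      have key1 : (2*σ) ^ (p/2-1) ≤ (σ + 2*x) ^ (p/2-1) := by
        apply Real.rpow_le_rpow_of_nonpos hσx (by nlinarith) (by linarith)
      have key2 : σ ^ (p/2-1) ≤ A * (σ + 2*x) ^ (p/2-1) := by
        have e1 : (2*σ) ^ (p/2-1) = 2 ^ (p/2-1) * σ ^ (p/2-1) :=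
          Real.mul_rpow (by norm_num) hσ0.le
        have h3 : A * (2 ^ (p/2-1) * σ ^ (p/2-1)) ≤ A * (σ + 2*x) ^ (p/2-1) := by
          apply mul_le_mul_of_nonneg_left _ hA0.le
          rw [← e1]; exact key1
        have h4 : σ ^ (p/2-1) ≤ A * (2 ^ (p/2-1) * σ ^ (p/2-1)) := by
          have h5 : 0 < σ ^ (p/2-1) := Real.rpow_pos_of_pos hσ0 _
          nlinarith
        linarith
      nlinarith [Real.rpow_pos_of_pos hσx (p/2-1), Real.rpow_pos_of_pos hσ0 (p/2-1)]
  exact hmono (Set.mem_Ici.2 (le_refl _)) (Set.mem_Ici.2 hs) hs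
theorem stmt_12 (p : ℝ) (hp1 : 1 < p) (hp2 : p ≤ 2) (z w : ℂ) :
    (‖w‖ ^ 2 + ‖z‖ ^ 2) ^ (p / 2)
      ≤ (1 + Real.cos (π / p)) ^ (-(p / 2)) * ‖w + (starRingEnd ℂ) z‖ ^ p
        - (2 : ℝ) ^ (p / 2) * Real.tan (π / (2 * p)) * ((w * z) ^ ((p : ℂ) / 2)).re := by
  have hpi := Real.pi_pos
  have hp0 : 0 < p := by linarith
  set α := π/(2*p) with hα
  have hα0 : 0 < α := by positivity
  have hα2 : α < π/2 := by
    rw [hα, div_lt_div_iff₀ (by positivity) (by norm_num)]; nlinarith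
  have hc : 0 < Real.cos α := Real.cos_pos_of_mem_Ioo ⟨by linarith, hα2⟩
  set c := Real.cos α with hcdef
  have hsα : 0 < Real.sin α := Real.sin_pos_of_pos_of_lt_pi hα0 (by linarith)
  have h2α : 2*α = π/p := by rw [hα]; field_simp
  have h2c : 1 + Real.cos (π/p) = 2*c^2 := by
    rw [← h2α, hcdef, Real.cos_sq]; ring
  set A := (1 + Real.cos (π / p)) ^ (-(p / 2)) with hAdef
  have hcp : 0 < c ^ p := Real.rpow_pos_of_pos hc _
  have hA : A = 2 ^ (-(p/2)) * (c^p)⁻¹ := by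
    have e1 : ((c^2 : ℝ)) ^ (-(p/2)) = (c^p)⁻¹ := by
      rw [← Real.rpow_natCast c 2, ← Real.rpow_mul hc.le,
        show ((2:ℕ):ℝ) * -(p/2) = -p by push_cast; ring, Real.rpow_neg hc.le]
    rw [hAdef, h2c, Real.mul_rpow (by norm_num) (by positivity), e1]
  have h2half : c ^ p ≤ 1/2 := by
    have := cosp_le_half hp1 hp2
    rwa [← hα, ← hcdef] at this
  have e2 : (2:ℝ) ^ (-(p/2)) * 2 ^ (p/2-1) = 2⁻¹ := by
    rw [← Real.rpow_add (by norm_num : (0:ℝ) < 2),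
      show -(p/2) + (p/2 - 1) = -1 by ring, Real.rpow_neg_one]
  have hA2 : 1 ≤ A * 2 ^ (p/2 - 1) := by
    have e3 : A * 2 ^ (p/2-1) = (c^p)⁻¹ * (2 ^ (-(p/2)) * 2 ^ (p/2-1)) := by
      rw [hA]; ring
    rw [e3, e2]
    have hinv : c^p * (c^p)⁻¹ = 1 := mul_inv_cancel₀ (ne_of_gt hcp)
    have hinvpos : 0 < (c^p)⁻¹ := inv_pos.2 hcp
    nlinarith
  have epow : ∀ a : ℝ, 0 ≤ a → (a^2) ^ (p/2) = a ^ p := fun a ha => by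
    rw [← Real.rpow_natCast a 2, ← Real.rpow_mul ha,
      show ((2:ℕ):ℝ) * (p/2) = p by push_cast; ring]
  rcases eq_or_ne (w*z) 0 with hwz | hwz
  · -- degenerate case
    have hne : ((p:ℂ)/2) ≠ 0 := by
      apply div_ne_zero _ two_ne_zero
      exact_mod_cast ne_of_gt hp0
    rw [hwz, Complex.zero_cpow hne, Complex.zero_re, mul_zero, sub_zero]
    have hA1 : 1 ≤ A := by
      have e4 : (2:ℝ) ^ (-(p/2)) * 2 = 2 ^ (-(p/2) + 1) := by
        rw [Real.rpow_add (by norm_num : (0:ℝ) < 2), Real.rpow_one]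
      have h5 : (1:ℝ) ≤ 2 ^ (-(p/2) + 1) := by
        rw [show (1:ℝ) = (2:ℝ) ^ (0:ℝ) by rw [Real.rpow_zero]]
        apply Real.rpow_le_rpow_of_exponent_le (by norm_num)
        rw [Real.rpow_zero]
        linarith
      have h6 : 0 < (2:ℝ) ^ (-(p/2)) := Real.rpow_pos_of_pos (by norm_num) _
      have hinv : c^p * (c^p)⁻¹ = 1 := mul_inv_cancel₀ (ne_of_gt hcp)
      have hinvpos : 0 < (c^p)⁻¹ := inv_pos.2 hcp
      have h7 : 2 ≤ (c^p)⁻¹ := by nlinarith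
      calc (1:ℝ) ≤ 2 ^ (-(p/2) + 1) := h5
        _ = 2 ^ (-(p/2)) * 2 := e4.symm
        _ ≤ 2 ^ (-(p/2)) * (c^p)⁻¹ := by nlinarith
        _ = A := hA.symm
    rcases mul_eq_zero.1 hwz with hw0 | hz0
    · rw [hw0]
      simp only [map_zero, zero_add, Complex.norm_conj, norm_zero]
      have hz := norm_nonneg z
      rw [show (0:ℝ)^2 + ‖z‖^2 = ‖z‖^2 by norm_num, epow _ hz]
      nlinarith [Real.rpow_nonneg hz p]
    · rw [hz0]
      simp only [map_zero, add_zero, norm_zero]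
      have hw := norm_nonneg w
      rw [show ‖w‖^2 + (0:ℝ)^2 = ‖w‖^2 by norm_num, epow _ hw]
      nlinarith [Real.rpow_nonneg hw p]
  · -- main case
    set r := ‖w*z‖ with hrdef
    have hrpos : 0 < r := norm_pos_iff.mpr hwz
    set φ := Complex.arg (w*z) with hφdef
    set x := (w*z).re with hxdef
    have hxr : |x| ≤ r := Complex.abs_re_le_norm _
    have hφpi : |φ| ≤ π := Complex.abs_arg_le_pi _
    have hψ0 : (0:ℝ) ≤ |φ|/2 := by positivity
    have hψ2 : |φ|/2 ≤ π/2 := by linarith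
    have hx_cos : x = r * Real.cos φ := by
      rw [hφdef, Complex.cos_arg hwz, ← hrdef, ← hxdef, mul_comm r,
        div_mul_cancel₀ x (ne_of_gt hrpos)]
    have hRe : ((w*z) ^ ((p:ℂ)/2)).re = r ^ (p/2) * Real.cos (p * (|φ|/2)) := by
      have hcast : ((p:ℂ)/2) = ((p/2:ℝ):ℂ) := by push_cast; ring
      rw [Complex.cpow_def_of_ne_zero hwz, hcast, Complex.exp_re]
      simp only [Complex.mul_re, Complex.mul_im, Complex.ofReal_re, Complex.ofReal_im,
        Complex.log_re, Complex.log_im, mul_zero, zero_mul, sub_zero, add_zero, zero_add]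
      rw [← hrdef, ← hφdef, ← Real.rpow_def_of_pos hrpos]
      congr 1
      rw [show p*(|φ|/2) = |φ| * (p/2) by ring]
      rcases abs_cases φ with ⟨h1,_⟩ | ⟨h1,_⟩
      · rw [h1]
      · rw [h1, show -φ*(p/2) = -(φ*(p/2)) by ring, Real.cos_neg]
    set s := ‖w‖ ^ 2 + ‖z‖ ^ 2 with hsdef
    have hs2r : 2*r ≤ s := by
      have e9 : r = ‖w‖ * ‖z‖ := by rw [hrdef]; exact norm_mul w z
      rw [e9, hsdef]
      nlinarith [sq_nonneg (‖w‖ - ‖z‖)]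
    have habs2 : ‖w + (starRingEnd ℂ) z‖^2 = s + 2*x := by
      rw [Complex.sq_norm, Complex.normSq_add, Complex.normSq_conj, Complex.conj_conj,
        hsdef, hxdef, Complex.sq_norm, Complex.sq_norm]
    have goalrw : ‖w + (starRingEnd ℂ) z‖ ^ p = (s + 2*x) ^ (p/2) := by
      rw [← epow _ (norm_nonneg _), habs2]
    -- step A instantiated
    have hstepA := stepA hp1 hp2 hψ0 hψ2
    rw [← hα, ← hcdef] at hstepA
    have hcosψ : 0 ≤ Real.cos (|φ|/2) :=
      Real.cos_nonneg_of_mem_Icc ⟨by linarith, hψ2⟩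
    have hinvpos : 0 < (c^p)⁻¹ := inv_pos.2 hcp
    have hstep2 : Real.sin α / c * Real.cos (p*(|φ|/2))
        ≤ (c^p)⁻¹ * Real.cos (|φ|/2) ^ p - 1 := by
      have e8 : c ^ (p-1) = c^p / c := by rw [Real.rpow_sub hc, Real.rpow_one]
      rw [e8] at hstepA
      have h9 := mul_le_mul_of_nonneg_left hstepA hinvpos.le
      have h10 : (c^p)⁻¹ * (c^p + c^p / c * Real.sin α * Real.cos (p*(|φ|/2)))
          = 1 + Real.sin α / c * Real.cos (p*(|φ|/2)) := by
        field_simp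
      rw [h10] at h9
      linarith
    have hcc : Real.cos (|φ|/2) = Real.cos (φ/2) := by
      rw [show |φ|/2 = |φ/2| by rw [abs_div]; norm_num, Real.cos_abs]
    have hhalf : Real.cos (φ/2)^2 = 1/2 + Real.cos φ / 2 := by
      have := Real.cos_sq (φ/2)
      rwa [show 2*(φ/2) = φ by ring] at this
    have e5 : 2*r + 2*x = 4*r*Real.cos (|φ|/2)^2 := by
      rw [hx_cos, hcc, hhalf]; ring
    have e4half : ((4:ℝ)) ^ (p/2) = 2 ^ p := by
      rw [show (4:ℝ) = (2:ℝ)^(2:ℝ) by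
          rw [show (2:ℝ) = ((2:ℕ):ℝ) by norm_num, Real.rpow_natCast]; norm_num,
        ← Real.rpow_mul (by norm_num), show (2:ℝ)*(p/2) = p by ring]
    have e2p : (2:ℝ) ^ (-(p/2)) * 2 ^ p = 2 ^ (p/2) := by
      rw [← Real.rpow_add (by norm_num : (0:ℝ) < 2), show -(p/2) + p = p/2 by ring]
    have e6 : A * (4*r*Real.cos (|φ|/2)^2) ^ (p/2)
        = 2^(p/2) * r^(p/2) * ((c^p)⁻¹ * Real.cos (|φ|/2) ^ p) := by
      rw [Real.mul_rpow (by positivity) (by positivity),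
        Real.mul_rpow (by norm_num) hrpos.le, epow _ hcosψ, e4half, hA]
      linear_combination ((c^p)⁻¹ * r^(p/2) * Real.cos (|φ|/2)^p) * e2p
    have e7 : ((2:ℝ)*r)^(p/2) = 2^(p/2)*r^(p/2) := Real.mul_rpow (by norm_num) hrpos.le
    have htan : Real.tan α = Real.sin α / c := Real.tan_eq_sin_div_cos α
    have hlow : 2^(p/2) * Real.tan α * (r^(p/2) * Real.cos (p*(|φ|/2)))
        ≤ A * (2*r + 2*x) ^ (p/2) - (2*r)^(p/2) := by
      rw [e5, e6, e7, htan]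
      have hpr : (0:ℝ) ≤ 2^(p/2) * r^(p/2) := by positivity
      have h11 := mul_le_mul_of_nonneg_left hstep2 hpr
      have h12 : 2^(p/2) * r^(p/2) * ((c^p)⁻¹ * Real.cos (|φ|/2) ^ p - 1)
          = 2^(p/2) * r^(p/2) * ((c^p)⁻¹ * Real.cos (|φ|/2) ^ p) - 2^(p/2) * r^(p/2) := by
        ring
      have h13 : 2^(p/2) * r^(p/2) * (Real.sin α / c * Real.cos (p*(|φ|/2)))
          = 2^(p/2) * (Real.sin α / c) * (r^(p/2) * Real.cos (p*(|φ|/2))) := by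
        ring
      rw [h12, h13] at h11
      linarith
    have hmon := stepB_mono hp1 hp2 hrpos hxr hA2 hs2r
    rw [hRe, goalrw]
    linarith
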